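/- Let n, k ≥ 1 be integers, let A ∈ ℝ^{n×(n+k)} have columns a_1,…,a_{n+k}, let Â ∈ ℝ^{(n+1)×(n+k)} be the matrix whose first row is (1,…,1) and whose bottom n rows form A, let d := rank(Â) − 1, and let B ∈ ℝ^{(n+k)×(n+k−d−1)} be any matrix whose columns form a basis of the right nullspace of Â (i.e., of {v ∈ ℝ^{n+k} : Âv = 0}). Then A is pyramidal if and only if some row of B is the zero vector. -/

import Mathlib

/-- The matrix `Â`: a top row of all ones, with bottom rows forming `A`
(whose columns are `a_1, …, a_N ∈ ℝⁿ`). -/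
def Ahat {n N : ℕ} (a : Fin N → Fin n → ℝ) : Matrix (Fin (n + 1)) (Fin N) ℝ :=
  Matrix.of fun i j => Fin.cases (motive := fun _ => ℝ) 1 (fun i' => a j i') i

/-- The dimension of the affine span of a set of points in ℝⁿ. -/
noncomputable def affDim {n : ℕ} (s : Set (Fin n → ℝ)) : ℕ :=
  Module.finrank ℝ (affineSpan ℝ s).direction

/-- The columns of `B` form a basis of the right nullspace `{v : Âv = 0}` of `Ah`. -/
def ColsBasisOfNullspace {n N r : ℕ} (Ah : Matrix (Fin (n + 1)) (Fin N) ℝ)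
    (B : Matrix (Fin N) (Fin r) ℝ) : Prop :=
  LinearIndependent ℝ (fun l : Fin r => fun j : Fin N => B j l) ∧
    Submodule.span ℝ (Set.range (fun l : Fin r => fun j : Fin N => B j l)) =
      LinearMap.ker Ah.mulVecLin

/-- `A` is pyramidal: some column `a_j` can be removed so that the remaining columns
lie in an affine subspace of dimension `d(A) − 1`, where `d(A) = rank(Â) − 1`. -/
def Pyramidal {n N : ℕ} (a : Fin N → Fin n → ℝ) : Prop :=
  ∃ j : Fin N, (affDim (a '' {i | i ≠ j}) : ℤ) ≤ (((Ahat a).rank - 1 : ℕ) : ℤ) - 1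

open Submodule Module Set


/-- The linear map `x ↦ Fin.cons 0 x`. -/
def consZeroL (n : ℕ) : (Fin n → ℝ) →ₗ[ℝ] (Fin (n + 1) → ℝ) where
  toFun x := Fin.cons 0 x
  map_add' x y := by
    funext i
    refine Fin.cases ?_ ?_ i <;> simp
  map_smul' c x := by
    funext i
    refine Fin.cases ?_ ?_ i <;> simp

lemma consZeroL_inj (n : ℕ) : Function.Injective (consZeroL n) := by
  intro x y h
  funext i
  have := congrFun h i.succ
  simpa [consZeroL] using this

lemma lemA {n : ℕ} {ι : Type} [Nonempty ι] (q : ι → Fin n → ℝ) :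
    Module.finrank ℝ (Submodule.span ℝ (Set.range fun i => (Fin.cons 1 (q i) : Fin (n+1) → ℝ)))
      = affDim (Set.range q) + 1 := by
  obtain ⟨i0⟩ := ‹Nonempty ι›
  set w : ι → Fin n → ℝ := fun i => q i - q i0 with hw
  have haff : affDim (Set.range q) = finrank ℝ (span ℝ (Set.range w)) := by
    unfold affDim
    rw [direction_affineSpan, vectorSpan_eq_span_vsub_set_right ℝ (Set.mem_range_self i0)]
    have : ((fun x => x -ᵥ q i0) '' range q) = range w := by
      rw [← Set.range_comp]; rfl
    rw [this]
  -- the shift equivalence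
  set u0 : Fin (n+1) → ℝ := Fin.cons 0 (q i0) with hu0
  set s : ((Fin (n+1) → ℝ) →ₗ[ℝ] (Fin (n+1) → ℝ)) := (LinearMap.proj 0).smulRight u0 with hs
  have hss : ∀ v, s (s v) = 0 := by
    intro v
    have h0 : u0 0 = 0 := rfl
    simp [hs, h0]
  set idm : ((Fin (n+1) → ℝ) →ₗ[ℝ] (Fin (n+1) → ℝ)) := LinearMap.id with hidm
  have h1 : ∀ v, (idm - s) ((idm + s) v) = v := by
    intro v; simp [hidm, map_add, hss v]
  have h2 : ∀ v, (idm + s) ((idm - s) v) = v := by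
    intro v; simp [hidm, map_sub, hss v]
  set T : (Fin (n+1) → ℝ) ≃ₗ[ℝ] (Fin (n+1) → ℝ) :=
    LinearEquiv.ofLinear (idm - s) (idm + s)
      (by apply LinearMap.ext; intro v; exact h1 v)
      (by apply LinearMap.ext; intro v; exact h2 v) with hT
  -- T maps the lifted points to cons 1 (w i)
  have hTcol : ∀ i, T (Fin.cons 1 (q i)) = Fin.cons 1 (w i) := by
    intro i
    have : (Fin.cons 1 (q i) : Fin (n+1) → ℝ) 0 = 1 := rfl
    funext r
    simp only [hT, LinearEquiv.ofLinear_apply, LinearMap.sub_apply, hidm, LinearMap.id_apply,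
      hs, LinearMap.smulRight_apply, LinearMap.proj_apply, this, one_smul, Pi.sub_apply, hu0]
    refine Fin.cases ?_ (fun r' => ?_) r <;> simp [hw]
  -- transport the span along T
  have hmap : Submodule.map (T : (Fin (n+1) → ℝ) →ₗ[ℝ] _) (span ℝ (range fun i => (Fin.cons 1 (q i) : Fin (n+1) → ℝ)))
      = span ℝ (range fun i => (Fin.cons 1 (w i) : Fin (n+1) → ℝ)) := by
    have hco : (⇑(T : (Fin (n+1) → ℝ) →ₗ[ℝ] (Fin (n+1) → ℝ)) ∘ fun i => (Fin.cons 1 (q i) : Fin (n+1) → ℝ)) = fun i => (Fin.cons 1 (w i) : Fin (n+1) → ℝ) :=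
      funext hTcol
    rw [Submodule.map_span, ← Set.range_comp, hco]
  have hrk1 : finrank ℝ (span ℝ (range fun i => (Fin.cons 1 (q i) : Fin (n+1) → ℝ)))
      = finrank ℝ (span ℝ (range fun i => (Fin.cons 1 (w i) : Fin (n+1) → ℝ))) := by
    rw [← hmap, LinearEquiv.finrank_map_eq]
  set c0 : Fin (n+1) → ℝ := Fin.cons 1 0 with hc0
  set V : Submodule ℝ (Fin (n+1) → ℝ) := span ℝ (range fun i => consZeroL n (w i)) with hV
  have hsplit : span ℝ (range fun i => (Fin.cons 1 (w i) : Fin (n+1) → ℝ)) = span ℝ {c0} ⊔ V := by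
    apply le_antisymm
    · rw [span_le]
      rintro _ ⟨i, rfl⟩
      show (Fin.cons 1 (w i) : Fin (n+1) → ℝ) ∈ (span ℝ {c0} ⊔ V)
      have : (Fin.cons 1 (w i) : Fin (n+1) → ℝ) = c0 + consZeroL n (w i) := by
        funext r
        refine Fin.cases ?_ (fun r' => ?_) r <;> simp [hc0, consZeroL]
      rw [this]
      exact Submodule.add_mem _ (Submodule.mem_sup_left (Submodule.mem_span_singleton_self c0))
        (Submodule.mem_sup_right (subset_span (Set.mem_range_self i)))
    · refine sup_le ?_ ?_ <;> rw [span_le]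
      · rintro _ rfl
        have : c0 = Fin.cons 1 (w i0) := by
          funext r
          refine Fin.cases ?_ (fun r' => ?_) r <;> simp [hc0, hw]
        rw [this]
        exact subset_span (Set.mem_range_self i0)
      · rintro _ ⟨i, rfl⟩
        show consZeroL n (w i) ∈ span ℝ (range fun i => (Fin.cons 1 (w i) : Fin (n+1) → ℝ))
        have : consZeroL n (w i) = (Fin.cons 1 (w i) : Fin (n+1) → ℝ) - Fin.cons 1 (w i0) := by
          funext r
          refine Fin.cases ?_ (fun r' => ?_) r <;> simp [consZeroL, hw]
        rw [this]
        exact Submodule.sub_mem _ (subset_span (Set.mem_range_self i))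
          (subset_span (Set.mem_range_self i0))
  have hVle : V ≤ LinearMap.ker (LinearMap.proj 0 : (Fin (n+1) → ℝ) →ₗ[ℝ] ℝ) := by
    rw [hV, span_le]
    rintro _ ⟨i, rfl⟩
    simp [LinearMap.mem_ker, consZeroL]
  have hinf : span ℝ {c0} ⊓ V = ⊥ := by
    rw [eq_bot_iff]
    rintro x ⟨hx1, hx2⟩
    obtain ⟨c, rfl⟩ := Submodule.mem_span_singleton.mp hx1
    have h0 : (c • c0) 0 = 0 := hVle hx2
    have : c = 0 := by simpa [hc0] using h0
    simp [this]
  have hc0ne : c0 ≠ 0 := by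
    intro h
    have := congrFun h 0
    simp [hc0] at this
  have hVrk : finrank ℝ V = finrank ℝ (span ℝ (range w)) := by
    have : V = Submodule.map (consZeroL n) (span ℝ (range w)) := by
      rw [Submodule.map_span, ← Set.range_comp, hV]
      rfl
    rw [this]
    exact ((span ℝ (range w)).equivMapOfInjective (consZeroL n) (consZeroL_inj n)).finrank_eq.symm
  have hsum := Submodule.finrank_sup_add_finrank_inf_eq (span ℝ {c0}) V
  rw [hinf, finrank_bot, finrank_span_singleton hc0ne] at hsum
  rw [hrk1, hsplit, haff]
  omega

section keypart
variable {n k : ℕ}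

variable {n k : ℕ}

set_option maxHeartbeats 1000000 in
set_option synthInstance.maxHeartbeats 400000 in
theorem keylemma (hn : 1 ≤ n) (hk : 1 ≤ k) (a : Fin (n + k) → Fin n → ℝ)
    (j : Fin (n + k)) :
    ((affDim (a '' {i | i ≠ j}) : ℤ) ≤ (((Ahat a).rank - 1 : ℕ) : ℤ) - 1) ↔
      (∀ v ∈ LinearMap.ker (Ahat a).mulVecLin, v j = 0) := by
  set f := (Ahat a).mulVecLin with hf
  set K := LinearMap.ker f with hK
  haveI hne : Nonempty {i : Fin (n + k) // i ≠ j} := by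
    obtain ⟨b, hb⟩ := Fintype.exists_ne_of_one_lt_card (by simp; omega) j
    exact ⟨⟨b, hb⟩⟩
  set ι := {i : Fin (n + k) // i ≠ j}
  set q : ι → (Fin n → ℝ) := fun i => a i with hq
  set W := Submodule.span ℝ (Set.range fun i : ι => (Fin.cons 1 (a i) : Fin (n + 1) → ℝ)) with hW
  have himg : a '' {i | i ≠ j} = Set.range q := by
    ext x
    constructor
    · rintro ⟨i, hi, rfl⟩; exact ⟨⟨i, hi⟩, rfl⟩
    · rintro ⟨⟨i, hi⟩, rfl⟩; exact ⟨i, hi, rfl⟩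
  have e3 : finrank ℝ W = affDim (a '' {i | i ≠ j}) + 1 := by
    rw [hW, himg]; exact lemA q
  set H := Submodule.span ℝ (Set.range fun i : ι => (Pi.single (i : Fin (n + k)) (1 : ℝ) : Fin (n + k) → ℝ)) with hH
  have hHker : H = LinearMap.ker (LinearMap.proj j : (Fin (n + k) → ℝ) →ₗ[ℝ] ℝ) := by
    apply le_antisymm
    · rw [hH, span_le]
      rintro _ ⟨i, rfl⟩
      have : j ≠ (i : Fin (n + k)) := Ne.symm i.2
      simp [LinearMap.mem_ker, Pi.single_apply, this]
    · intro v hv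
      have hvj : v j = 0 := hv
      have hsum : ∑ i ∈ Finset.univ.erase j, Pi.single i (v i) = v := by
        have h1 : ∑ i ∈ Finset.univ.erase j, Pi.single i (v i) + Pi.single j (v j)
            = ∑ i : Fin (n + k), Pi.single i (v i) :=
          Finset.sum_erase_add _ _ (Finset.mem_univ j)
        rw [hvj, Pi.single_zero, add_zero] at h1
        rw [h1, Finset.univ_sum_single]
      rw [← hsum]
      apply Submodule.sum_mem
      intro i hi
      have hij : i ≠ j := (Finset.mem_erase.mp hi).1
      have : Pi.single i (v i) = (v i) • (Pi.single i (1 : ℝ) : Fin (n + k) → ℝ) := by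
        funext r; by_cases h : r = i <;> simp [Pi.single_apply, h]
      rw [this]
      exact Submodule.smul_mem _ _ (subset_span ⟨⟨i, hij⟩, rfl⟩)
  have hcardι : Fintype.card ι = n + k - 1 := by
    have h1 : Fintype.card {x : Fin (n + k) // ¬ x = j}
        = Fintype.card (Fin (n + k)) - Fintype.card {x : Fin (n + k) // x = j} :=
      Fintype.card_subtype_compl _
    rw [Fintype.card_subtype_eq, Fintype.card_fin] at h1
    exact h1
  have hfinH : finrank ℝ H = n + k - 1 := by
    have hli : LinearIndependent ℝ
        (fun i : ι => (Pi.single (i : Fin (n + k)) (1 : ℝ) : Fin (n + k) → ℝ)) := by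
      have h0 := (Pi.basisFun ℝ (Fin (n + k))).linearIndependent.comp
        (Subtype.val : ι → Fin (n + k)) Subtype.val_injective
      have h2 : (⇑(Pi.basisFun ℝ (Fin (n + k))) ∘ (Subtype.val : ι → Fin (n + k)))
          = fun i : ι => (Pi.single (i : Fin (n + k)) (1 : ℝ) : Fin (n + k) → ℝ) := by
        funext i; exact Pi.basisFun_apply ℝ (Fin (n + k)) i
      rwa [h2] at h0
    rw [hH, finrank_span_eq_card hli, hcardι]
  have hmapW : Submodule.map f H = W := by
    have hcol : (⇑f ∘ fun i : ι => Pi.single (i : Fin (n + k)) (1 : ℝ))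
        = fun i : ι => (Fin.cons 1 (a i) : Fin (n + 1) → ℝ) := by
      funext i
      show f (Pi.single (i : Fin (n + k)) (1 : ℝ)) = _
      rw [hf]
      show (Ahat a).mulVec (Pi.single (i : Fin (n + k)) (1 : ℝ)) = _
      rw [Matrix.mulVec_single]
      funext r
      simp only [Pi.smul_apply, MulOpposite.smul_eq_mul_unop, MulOpposite.unop_op, mul_one]
      rfl
    rw [hH, Submodule.map_span, ← Set.range_comp, hcol, hW]
  have e1 : finrank ℝ W + finrank ℝ (K ⊓ H : Submodule ℝ (Fin (n + k) → ℝ)) = n + k - 1 := by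
    have h0 := LinearMap.finrank_range_add_finrank_ker (f.domRestrict H)
    rw [LinearMap.range_domRestrict, hmapW, LinearMap.ker_domRestrict] at h0
    have hco : Submodule.comap H.subtype K = Submodule.comap H.subtype (K ⊓ H) := by
      ext x; simp [x.2]
    have hfr : finrank ℝ (Submodule.comap H.subtype (K ⊓ H)) = finrank ℝ (K ⊓ H : Submodule ℝ (Fin (n + k) → ℝ)) :=
      (Submodule.comapSubtypeEquivOfLe (inf_le_right : K ⊓ H ≤ H)).finrank_eq
    rw [hco, hfr] at h0
    rw [h0]
    exact hfinH
  have e2 : (Ahat a).rank + finrank ℝ K = n + k := by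
    have h0 := LinearMap.finrank_range_add_finrank_ker f
    have h1 : finrank ℝ (Fin (n + k) → ℝ) = n + k := by simp
    rw [h1] at h0
    exact h0
  have hKHle : finrank ℝ (K ⊓ H : Submodule ℝ (Fin (n + k) → ℝ)) ≤ finrank ℝ K :=
    Submodule.finrank_mono inf_le_left
  constructor
  · intro hineq
    have hr2 : affDim (a '' {i | i ≠ j}) + 2 ≤ (Ahat a).rank := by omega
    have hge : finrank ℝ K ≤ finrank ℝ (K ⊓ H : Submodule ℝ (Fin (n + k) → ℝ)) := by omega
    have heq : K ⊓ H = K := Submodule.eq_of_le_of_finrank_le inf_le_left hge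
    intro v hv
    have : v ∈ H := by
      rw [← heq] at hv
      exact hv.2
    rw [hHker] at this
    exact this
  · intro hvj
    have hKle : K ≤ H := by
      intro v hv
      rw [hHker]
      exact hvj v hv
    have heq : K ⊓ H = K := inf_eq_left.mpr hKle
    have hdk : finrank ℝ (K ⊓ H : Submodule ℝ (Fin (n + k) → ℝ)) = finrank ℝ K := by rw [heq]
    have hr : (Ahat a).rank = affDim (a '' {i | i ≠ j}) + 2 := by omega
    omega
end keypart

theorem stmt6 (n k : ℕ) (hn : 1 ≤ n) (hk : 1 ≤ k)
    (a : Fin (n + k) → Fin n → ℝ)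
    (B : Matrix (Fin (n + k)) (Fin (n + k - ((Ahat a).rank - 1) - 1)) ℝ)
    (hB : ColsBasisOfNullspace (Ahat a) B) :
    Pyramidal a ↔ ∃ i : Fin (n + k), ∀ l, B i l = 0 := by
  obtain ⟨-, hspan⟩ := hB
  have hBiff : ∀ i : Fin (n + k),
      (∀ l, B i l = 0) ↔ (∀ v ∈ LinearMap.ker (Ahat a).mulVecLin, v i = 0) := by
    intro i
    constructor
    · intro h v hv
      rw [← hspan] at hv
      have hle : Submodule.span ℝ (Set.range fun l => fun j : Fin (n + k) => B j l)
          ≤ LinearMap.ker (LinearMap.proj i : (Fin (n + k) → ℝ) →ₗ[ℝ] ℝ) := by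
        rw [Submodule.span_le]
        rintro _ ⟨l, rfl⟩
        simpa [LinearMap.mem_ker] using h l
      exact hle hv
    · intro h l
      have hmem : (fun j => B j l) ∈ LinearMap.ker (Ahat a).mulVecLin := by
        rw [← hspan]
        exact Submodule.subset_span (Set.mem_range_self l)
      exact h _ hmem
  unfold Pyramidal
  exact exists_congr fun j => (keylemma hn hk a j).trans (hBiff j).symm
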